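/- Let μ be a positive finite measure on an interval I ⊆ ℝ, and let f, g : I → ℝ be non-decreasing functions such that f, g, and f·g are integrable with respect to μ. If μ(I) · ∫_I f(x)g(x) dμ(x) = (∫_I f dμ) · (∫_I g dμ), then f is constant μ-almost everywhere on I or g is constant μ-almost everywhere on I. -/

import Mathlib

open MeasureTheory

lemma exists_threshold (ν : Measure ℝ) [IsFiniteMeasure ν] (I : Set ℝ)
    (hIae : ∀ᵐ x ∂ν, x ∈ I) (f : ℝ → ℝ)
    (h : ¬ ∃ c : ℝ, ∀ᵐ x ∂ν, f x = c) :
    ∃ a : ℝ, 0 < ν {x | x ∈ I ∧ f x ≤ a} ∧ 0 < ν {x | x ∈ I ∧ a < f x} := by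
  by_contra hcon
  push_neg at hcon
  have key : ∀ a : ℝ, ν {x | x ∈ I ∧ f x ≤ a} = 0 ∨ ν {x | x ∈ I ∧ a < f x} = 0 := by
    intro a
    by_contra hk
    push_neg at hk
    exact hk.2 (le_antisymm (hcon a (pos_iff_ne_zero.mpr hk.1)) zero_le)
  have hIc : ν {x | x ∉ I} = 0 := hIae
  have cover : ∀ (s : ℕ → Set ℝ), (∀ x ∈ I, ∃ n, x ∈ s n) → (∀ n, ν (s n) = 0) →
      ν Set.univ = 0 := by
    intro s hs h0
    refine measure_mono_null (fun x _ => ?_) (measure_union_null hIc (measure_iUnion_null h0))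
    by_cases hx : x ∈ I
    · exact Or.inr (Set.mem_iUnion.mpr (hs x hx))
    · exact Or.inl hx
  have hν0 : ν Set.univ ≠ 0 := by
    intro h0
    refine h ⟨0, ?_⟩
    rw [Filter.Eventually, mem_ae_iff]
    exact measure_mono_null (Set.subset_univ _) h0
  have hA : ∃ a : ℝ, ν {x | x ∈ I ∧ f x ≤ a} ≠ 0 := by
    by_contra hAc
    push_neg at hAc
    refine hν0 (cover (fun n => {x | x ∈ I ∧ f x ≤ n}) (fun x hx => ?_) (fun n => hAc n))
    obtain ⟨n, hn⟩ := exists_nat_ge (f x)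
    exact ⟨n, show x ∈ I ∧ f x ≤ (n:ℝ) from ⟨hx, hn⟩⟩
  set S : Set ℝ := {a | ν {x | x ∈ I ∧ a < f x} = 0} with hS
  have hSne : S.Nonempty := by
    obtain ⟨a, ha⟩ := hA
    exact ⟨a, (key a).resolve_left ha⟩
  have hSbd : BddBelow S := by
    by_contra hbb
    rw [not_bddBelow_iff] at hbb
    refine hν0 (cover (fun n => {x | x ∈ I ∧ -(n : ℝ) < f x}) (fun x hx => ?_) (fun n => ?_))
    · obtain ⟨n, hn⟩ := exists_nat_gt (-(f x))
      exact ⟨n, show x ∈ I ∧ -(n:ℝ) < f x from ⟨hx, by linarith⟩⟩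
    · obtain ⟨s, hsS, hs⟩ := hbb (-(n : ℝ))
      have hsS' : ν {x | x ∈ I ∧ s < f x} = 0 := hsS
      exact measure_mono_null (fun x (hx : x ∈ I ∧ -(n:ℝ) < f x) =>
        (⟨hx.1, lt_trans hs hx.2⟩ : x ∈ I ∧ s < f x)) hsS'
  set c := sInf S with hc
  refine h ⟨c, ?_⟩
  rw [Filter.Eventually, mem_ae_iff]
  have hsubset : {x | f x = c}ᶜ ⊆ {x | x ∉ I} ∪
      ((⋃ n : ℕ, {x | x ∈ I ∧ f x ≤ c - 1 / (n + 1)}) ∪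
       (⋃ n : ℕ, {x | x ∈ I ∧ c + 1 / (n + 1) < f x})) := by
    intro x hx
    by_cases hxI : x ∈ I
    · rcases lt_or_gt_of_ne (hx : f x ≠ c) with hlt | hgt
      · obtain ⟨n, hn⟩ := exists_nat_one_div_lt (sub_pos.mpr hlt)
        exact Or.inr (Or.inl (Set.mem_iUnion.mpr ⟨n, hxI, by
          have : (1:ℝ)/(n+1) < c - f x := hn
          linarith⟩))
      · obtain ⟨n, hn⟩ := exists_nat_one_div_lt (sub_pos.mpr hgt)
        exact Or.inr (Or.inr (Set.mem_iUnion.mpr ⟨n, hxI, by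
          have : (1:ℝ)/(n+1) < f x - c := hn
          linarith⟩))
    · exact Or.inl hxI
  refine measure_mono_null hsubset
    (measure_union_null hIc (measure_union_null (measure_iUnion_null fun n => ?_)
      (measure_iUnion_null fun n => ?_)))
  · have hε : (0:ℝ) < 1 / (n + 1) := by positivity
    have hnot : c - 1 / (n + 1) ∉ S := by
      intro hmem
      have := csInf_le hSbd hmem
      rw [← hc] at this
      linarith
    exact (key (c - 1 / (n + 1))).resolve_right hnot
  · have hε : (0:ℝ) < 1 / (n + 1) := by positivity
    have : sInf S < c + 1 / (n + 1) := by rw [← hc]; linarith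
    obtain ⟨s, hsS, hs⟩ := (csInf_lt_iff hSbd hSne).mp this
    have hsS' : ν {x | x ∈ I ∧ s < f x} = 0 := hsS
    exact measure_mono_null (fun x (hx : x ∈ I ∧ c + 1/(n+1) < f x) =>
      (⟨hx.1, lt_trans hs hx.2⟩ : x ∈ I ∧ s < f x)) hsS'

/-- **Equality case in Chebyshev's integral inequality.** If `μ` is a finite (nonnegative)
measure on an interval `I ⊆ ℝ` and `f`, `g` are non-decreasing on `I` with `f`, `g`, `f·g`
integrable with respect to `μ` on `I`, and if
`μ(I) · ∫_I f g dμ = (∫_I f dμ) · (∫_I g dμ)`, then `f` or `g` is constant `μ`-almost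
everywhere on `I`. -/
theorem chebyshev_integral_equality_case
    (I : Set ℝ) (hI : I.OrdConnected)
    (μ : Measure ℝ) [IsFiniteMeasure μ]
    (f g : ℝ → ℝ)
    (hf : MonotoneOn f I) (hg : MonotoneOn g I)
    (hfi : IntegrableOn f I μ) (hgi : IntegrableOn g I μ)
    (hfgi : IntegrableOn (fun x => f x * g x) I μ)
    (heq : (μ I).toReal * ∫ x in I, f x * g x ∂μ =
      (∫ x in I, f x ∂μ) * ∫ x in I, g x ∂μ) :
    (∃ c : ℝ, ∀ᵐ x ∂μ.restrict I, f x = c) ∨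
      (∃ c : ℝ, ∀ᵐ x ∂μ.restrict I, g x = c) := by
  set ν := μ.restrict I with hνdef
  have hImeas : MeasurableSet I := hI.measurableSet
  have hIae : ∀ᵐ x ∂ν, x ∈ I := ae_restrict_mem hImeas
  have hIc : ν {x | x ∉ I} = 0 := hIae
  by_contra hcon
  rw [not_or] at hcon
  obtain ⟨a, ha1, ha2⟩ := exists_threshold ν I hIae f hcon.1
  obtain ⟨b, hb1, hb2⟩ := exists_threshold ν I hIae g hcon.2
  -- double integral setup
  have i1 : Integrable (fun p : ℝ × ℝ => f p.1 * g p.2) (ν.prod ν) := Integrable.mul_prod hfi hgi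
  have i2 : Integrable (fun p : ℝ × ℝ => g p.1 * f p.2) (ν.prod ν) := Integrable.mul_prod hgi hfi
  have i3 : Integrable (fun p : ℝ × ℝ => (f p.1 * g p.1) * (1:ℝ)) (ν.prod ν) :=
    Integrable.mul_prod hfgi (integrable_const 1)
  have i4 : Integrable (fun p : ℝ × ℝ => (1:ℝ) * (f p.2 * g p.2)) (ν.prod ν) :=
    Integrable.mul_prod (integrable_const 1) hfgi
  have hFi : Integrable (fun p : ℝ × ℝ => (f p.1 - f p.2) * (g p.1 - g p.2)) (ν.prod ν) := by
    refine (((i3.sub i1).sub i2).add i4).congr (Filter.Eventually.of_forall fun p => ?_)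
    simp only [Pi.add_apply, Pi.sub_apply, Pi.neg_apply]
    ring
  have hone : ∫ x, (1:ℝ) ∂ν = (ν Set.univ).toReal := by simp [Measure.real]
  have hm : ν Set.univ = μ I := Measure.restrict_apply_univ I
  have hzero : ∫ p, (f p.1 - f p.2) * (g p.1 - g p.2) ∂(ν.prod ν) = 0 := by
    have hz : ∫ p : ℝ × ℝ, (f p.1 - f p.2) * (g p.1 - g p.2) ∂(ν.prod ν) =
        (∫ p : ℝ × ℝ, (f p.1 * g p.1) * (1:ℝ) ∂(ν.prod ν))
          - (∫ p : ℝ × ℝ, f p.1 * g p.2 ∂(ν.prod ν))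
          - (∫ p : ℝ × ℝ, g p.1 * f p.2 ∂(ν.prod ν))
          + ∫ p : ℝ × ℝ, (1:ℝ) * (f p.2 * g p.2) ∂(ν.prod ν) := by
      have i31 : Integrable (fun p : ℝ × ℝ => (f p.1 * g p.1) * (1:ℝ) - f p.1 * g p.2)
          (ν.prod ν) := i3.sub i1
      have i312 : Integrable (fun p : ℝ × ℝ =>
          (f p.1 * g p.1) * (1:ℝ) - f p.1 * g p.2 - g p.1 * f p.2) (ν.prod ν) := i31.sub i2
      have s1 : ∫ p : ℝ × ℝ, ((f p.1 * g p.1) * (1:ℝ) - f p.1 * g p.2) ∂(ν.prod ν) =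
          (∫ p : ℝ × ℝ, (f p.1 * g p.1) * (1:ℝ) ∂(ν.prod ν))
            - ∫ p : ℝ × ℝ, f p.1 * g p.2 ∂(ν.prod ν) := integral_sub i3 i1
      have s2 : ∫ p : ℝ × ℝ, ((f p.1 * g p.1) * (1:ℝ) - f p.1 * g p.2 - g p.1 * f p.2)
          ∂(ν.prod ν) =
          (∫ p : ℝ × ℝ, ((f p.1 * g p.1) * (1:ℝ) - f p.1 * g p.2) ∂(ν.prod ν))
            - ∫ p : ℝ × ℝ, g p.1 * f p.2 ∂(ν.prod ν) := integral_sub i31 i2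
      have s3 : ∫ p : ℝ × ℝ, ((f p.1 * g p.1) * (1:ℝ) - f p.1 * g p.2 - g p.1 * f p.2
            + (1:ℝ) * (f p.2 * g p.2)) ∂(ν.prod ν) =
          (∫ p : ℝ × ℝ, ((f p.1 * g p.1) * (1:ℝ) - f p.1 * g p.2 - g p.1 * f p.2) ∂(ν.prod ν))
            + ∫ p : ℝ × ℝ, (1:ℝ) * (f p.2 * g p.2) ∂(ν.prod ν) := integral_add i312 i4
      have s0 : ∫ p : ℝ × ℝ, (f p.1 - f p.2) * (g p.1 - g p.2) ∂(ν.prod ν) =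
          ∫ p : ℝ × ℝ, ((f p.1 * g p.1) * (1:ℝ) - f p.1 * g p.2 - g p.1 * f p.2
            + (1:ℝ) * (f p.2 * g p.2)) ∂(ν.prod ν) :=
        integral_congr_ae (Filter.Eventually.of_forall fun p => by ring)
      rw [s0, s3, s2, s1]
    have e1 := integral_prod_mul (μ := ν) (ν := ν) f g
    have e2 := integral_prod_mul (μ := ν) (ν := ν) g f
    have e3 : ∫ p : ℝ × ℝ, (f p.1 * g p.1) * (1:ℝ) ∂(ν.prod ν) =
        (∫ x, f x * g x ∂ν) * ∫ x, (1:ℝ) ∂ν := by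
      simpa using integral_prod_mul (μ := ν) (ν := ν) (fun x => f x * g x) (fun _ => (1:ℝ))
    have e4 : ∫ p : ℝ × ℝ, (1:ℝ) * (f p.2 * g p.2) ∂(ν.prod ν) =
        (∫ x, (1:ℝ) ∂ν) * ∫ x, f x * g x ∂ν := by
      simpa using integral_prod_mul (μ := ν) (ν := ν) (fun _ => (1:ℝ)) (fun x => f x * g x)
    rw [hz, e1, e2, e3, e4, hone, hm]
    nlinarith [heq]
  have h1 : ∀ᵐ p : ℝ × ℝ ∂(ν.prod ν), p.1 ∈ I := by
    rw [Filter.Eventually, mem_ae_iff]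
    have : {p : ℝ × ℝ | p.1 ∈ I}ᶜ = Iᶜ ×ˢ Set.univ := by ext p; simp
    rw [this, Measure.prod_prod]
    have : ν Iᶜ = 0 := hIc
    simp [this]
  have h2 : ∀ᵐ p : ℝ × ℝ ∂(ν.prod ν), p.2 ∈ I := by
    rw [Filter.Eventually, mem_ae_iff]
    have : {p : ℝ × ℝ | p.2 ∈ I}ᶜ = Set.univ ×ˢ Iᶜ := by ext p; simp
    rw [this, Measure.prod_prod]
    have : ν Iᶜ = 0 := hIc
    simp [this]
  have hFnn : 0 ≤ᵐ[ν.prod ν] fun p : ℝ × ℝ => (f p.1 - f p.2) * (g p.1 - g p.2) := by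
    filter_upwards [h1, h2] with p hp1 hp2
    show (0:ℝ) ≤ (f p.1 - f p.2) * (g p.1 - g p.2)
    rcases le_total p.1 p.2 with hle | hle
    · have hf' := hf hp1 hp2 hle
      have hg' := hg hp1 hp2 hle
      nlinarith
    · have hf' := hf hp2 hp1 hle
      have hg' := hg hp2 hp1 hle
      nlinarith
  have hFae : (fun p : ℝ × ℝ => (f p.1 - f p.2) * (g p.1 - g p.2)) =ᵐ[ν.prod ν] 0 :=
    (integral_eq_zero_iff_of_nonneg_ae hFnn hFi).mp hzero
  have hFnull : (ν.prod ν) {p : ℝ × ℝ | (f p.1 - f p.2) * (g p.1 - g p.2) ≠ 0} = 0 := by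
    have := hFae
    rw [Filter.EventuallyEq, Filter.Eventually, mem_ae_iff] at this
    convert this using 2
    ext p; simp
  -- the four sets
  set A : Set ℝ := {x | x ∈ I ∧ f x ≤ a} with hA
  set B : Set ℝ := {x | x ∈ I ∧ g x ≤ b} with hB
  set A' : Set ℝ := {x | x ∈ I ∧ a < f x} with hA'
  set B' : Set ℝ := {x | x ∈ I ∧ b < g x} with hB'
  have hnested : A ⊆ B ∨ B ⊆ A := by
    by_contra hn
    push_neg at hn
    obtain ⟨x, hxA, hxB⟩ := Set.not_subset.mp hn.1
    obtain ⟨y, hyB, hyA⟩ := Set.not_subset.mp hn.2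
    have hxg : b < g x := lt_of_not_ge fun hle => hxB ⟨hxA.1, hle⟩
    have hyf : a < f y := lt_of_not_ge fun hle => hyA ⟨hyB.1, hle⟩
    rcases le_total x y with hle | hle
    · exact absurd (hg hxA.1 hyB.1 hle) (not_le.mpr (lt_of_le_of_lt hyB.2 hxg))
    · exact absurd (hf hyB.1 hxA.1 hle) (not_le.mpr (lt_of_le_of_lt hxA.2 hyf))
  have main : ∀ (S T : Set ℝ), S ⊆ A' → S ⊆ B' → T ⊆ A → T ⊆ B →
      0 < ν S → 0 < ν T → False := by
    intro S T hSA hSB hTA hTB hS hT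
    have hsub : S ×ˢ T ⊆ {p : ℝ × ℝ | (f p.1 - f p.2) * (g p.1 - g p.2) ≠ 0} := by
      rintro ⟨x, y⟩ ⟨hx, hy⟩
      have h1 : f y ≤ a := (hTA hy).2
      have h2 : a < f x := (hSA hx).2
      have h3 : g y ≤ b := (hTB hy).2
      have h4 : b < g x := (hSB hx).2
      have : 0 < (f x - f y) * (g x - g y) := by nlinarith
      exact ne_of_gt this
    have := measure_mono_null hsub hFnull
    rw [Measure.prod_prod] at this
    rcases mul_eq_zero.mp this with h | h
    · exact absurd h (pos_iff_ne_zero.mp hS)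
    · exact absurd h (pos_iff_ne_zero.mp hT)
  rcases hnested with hAB | hBA
  · -- A ⊆ B, so B' ⊆ A'
    have hBA' : B' ⊆ A' := by
      intro x hx
      refine ⟨hx.1, lt_of_not_ge fun hle => ?_⟩
      exact absurd (hAB ⟨hx.1, hle⟩).2 (not_le.mpr hx.2)
    exact main B' A hBA' (fun x hx => hx) (fun x hx => hx) hAB hb2 ha1
  · have hAB' : A' ⊆ B' := by
      intro x hx
      refine ⟨hx.1, lt_of_not_ge fun hle => ?_⟩
      exact absurd (hBA ⟨hx.1, hle⟩).2 (not_le.mpr hx.2)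
    exact main A' B (fun x hx => hx) hAB' hBA (fun x hx => hx) ha2 hb1
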